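/- arXiv:0911.3712 — 3 statements merged into one kernel-verified Lean document; each statement's English description precedes it below -/
import Mathlib

section
/- Let P_1, …, P_q ⊆ ℝ^m be (nonempty) polytopes such that each P_i has an extension Q_i ⊆ ℝ^{d_i} of size s_i (i.e., Q_i is a polyhedron with at most s_i facets and there is an affine map p_i : ℝ^{d_i} → ℝ^m with p_i(Q_i) = P_i). Then the polytope P = conv(P_1 ∪ ⋯ ∪ P_q) has an extension of size at most ∑_{i=1}^q (s_i + 1). -/
open scoped BigOperators
open Finset

noncomputable section BalasAux

variable {m q : ℕ}

/-- Coefficients of a block row: the block `i` carries coefficients `c`, other blocks `0`. -/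
def blockCoeff (d : Fin q → ℕ) (i : Fin q) (c : Fin (d i) → ℝ) :
    (Σ i' : Fin q, Fin (d i')) → ℝ :=
  fun x => if h : x.1 = i then c (Fin.cast (congrArg d h) x.2) else 0

lemma sum_blockCoeff (d : Fin q → ℕ) (i : Fin q) (c : Fin (d i) → ℝ)
    (Y : (Σ i' : Fin q, Fin (d i')) → ℝ) :
    ∑ x : Σ i' : Fin q, Fin (d i'), blockCoeff d i c x * Y x
      = ∑ j : Fin (d i), c j * Y ⟨i, j⟩ := by
  classical
  rw [show (univ : Finset (Σ i' : Fin q, Fin (d i'))) = univ.sigma (fun _ => univ) from rfl,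
    Finset.sum_sigma]
  rw [Finset.sum_eq_single i (fun i' _ h => Finset.sum_eq_zero fun j _ => by
      simp [blockCoeff, h]) (fun h => absurd (mem_univ i) h)]
  refine Finset.sum_congr rfl fun j _ => ?_
  have : blockCoeff d i c ⟨i, j⟩ = c j := by
    simp only [blockCoeff, dif_pos]
    exact congrArg c (Fin.ext rfl)
  rw [this]

variable (d g s : Fin q → ℕ)

/-- Equality rows of the Balas extension. -/
def eqRow (Aeq : ∀ i, Fin (g i) → Fin (d i) → ℝ) (beq : ∀ i, Fin (g i) → ℝ) :
    ((Σ i : Fin q, Fin (g i)) ⊕ Unit) → ((Σ i : Fin q, Fin (d i)) ⊕ Fin q) → ℝ :=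
  fun u v =>
    match u, v with
    | .inl ⟨i, t⟩, .inl x => blockCoeff d i (Aeq i t) x
    | .inl ⟨i, t⟩, .inr i' => if i' = i then -(beq i t) else 0
    | .inr _, .inl _ => 0
    | .inr _, .inr _ => 1

def eqRhs : ((Σ i : Fin q, Fin (g i)) ⊕ Unit) → ℝ :=
  fun u => match u with
  | .inl _ => 0
  | .inr _ => 1

/-- Inequality rows of the Balas extension. -/
def ineqRow (A : ∀ i, Fin (s i) → Fin (d i) → ℝ) (b : ∀ i, Fin (s i) → ℝ) :
    ((Σ i : Fin q, Fin (s i)) ⊕ Fin q) → ((Σ i : Fin q, Fin (d i)) ⊕ Fin q) → ℝ :=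
  fun u v =>
    match u, v with
    | .inl ⟨i, t⟩, .inl x => blockCoeff d i (A i t) x
    | .inl ⟨i, t⟩, .inr i' => if i' = i then -(b i t) else 0
    | .inr i, .inl _ => 0
    | .inr i, .inr i' => if i' = i then -1 else 0

/-- The projection map of the Balas extension. -/
def bigLin (p : ∀ i, (Fin (d i) → ℝ) →ᵃ[ℝ] (Fin m → ℝ)) :
    (((Σ i : Fin q, Fin (d i)) ⊕ Fin q) → ℝ) →ₗ[ℝ] (Fin m → ℝ) :=
  ∑ i : Fin q,
    ((p i).linear ∘ₗ LinearMap.funLeft ℝ ℝ (fun j => Sum.inl ⟨i, j⟩)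
      + (LinearMap.toSpanSingleton ℝ (Fin m → ℝ) (p i 0)) ∘ₗ LinearMap.proj (Sum.inr i))

lemma bigLin_apply (p : ∀ i, (Fin (d i) → ℝ) →ᵃ[ℝ] (Fin m → ℝ))
    (Y : ((Σ i : Fin q, Fin (d i)) ⊕ Fin q) → ℝ) :
    bigLin d p Y
      = ∑ i : Fin q, ((p i).linear (fun j => Y (Sum.inl ⟨i, j⟩)) + Y (Sum.inr i) • (p i 0)) := by
  simp [bigLin, LinearMap.sum_apply, LinearMap.funLeft_apply, LinearMap.toSpanSingleton_apply,
    Function.comp]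
  rfl

section Rows
variable (Aeq : ∀ i, Fin (g i) → Fin (d i) → ℝ) (beq : ∀ i, Fin (g i) → ℝ)
  (A : ∀ i, Fin (s i) → Fin (d i) → ℝ) (b : ∀ i, Fin (s i) → ℝ)
  (Y : ((Σ i : Fin q, Fin (d i)) ⊕ Fin q) → ℝ)

lemma sum_ind (i : Fin q) (r : ℝ) (L : Fin q → ℝ) :
    ∑ i' : Fin q, (if i' = i then r else 0) * L i' = r * L i := by
  classical
  rw [Finset.sum_congr rfl (fun i' _ => ite_mul (i' = i) r 0 (L i'))]
  simp [Finset.sum_ite_eq']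

lemma eqRow_inl_sum (i : Fin q) (t : Fin (g i)) :
    ∑ v, eqRow d g Aeq beq (Sum.inl ⟨i, t⟩) v * Y v
      = (∑ j, Aeq i t j * Y (Sum.inl ⟨i, j⟩)) - beq i t * Y (Sum.inr i) := by
  rw [Fintype.sum_sum_type]
  rw [show (∑ x : Σ i' : Fin q, Fin (d i'), eqRow d g Aeq beq (Sum.inl ⟨i, t⟩) (Sum.inl x) * Y (Sum.inl x))
      = ∑ x : Σ i' : Fin q, Fin (d i'), blockCoeff d i (Aeq i t) x * (fun x => Y (Sum.inl x)) x from rfl,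
    sum_blockCoeff]
  rw [show (∑ i' : Fin q, eqRow d g Aeq beq (Sum.inl ⟨i, t⟩) (Sum.inr i') * Y (Sum.inr i'))
      = ∑ i' : Fin q, (if i' = i then -(beq i t) else 0) * Y (Sum.inr i') from rfl, sum_ind]
  ring

lemma eqRow_inr_sum (u : Unit) :
    ∑ v, eqRow d g Aeq beq (Sum.inr u) v * Y v = ∑ i : Fin q, Y (Sum.inr i) := by
  rw [Fintype.sum_sum_type]
  simp [eqRow]

lemma ineqRow_inl_sum (i : Fin q) (t : Fin (s i)) :
    ∑ v, ineqRow d s A b (Sum.inl ⟨i, t⟩) v * Y v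
      = (∑ j, A i t j * Y (Sum.inl ⟨i, j⟩)) - b i t * Y (Sum.inr i) := by
  rw [Fintype.sum_sum_type]
  rw [show (∑ x : Σ i' : Fin q, Fin (d i'), ineqRow d s A b (Sum.inl ⟨i, t⟩) (Sum.inl x) * Y (Sum.inl x))
      = ∑ x : Σ i' : Fin q, Fin (d i'), blockCoeff d i (A i t) x * (fun x => Y (Sum.inl x)) x from rfl,
    sum_blockCoeff]
  rw [show (∑ i' : Fin q, ineqRow d s A b (Sum.inl ⟨i, t⟩) (Sum.inr i') * Y (Sum.inr i'))
      = ∑ i' : Fin q, (if i' = i then -(b i t) else 0) * Y (Sum.inr i') from rfl, sum_ind]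
  ring

lemma ineqRow_inr_sum (i : Fin q) :
    ∑ v, ineqRow d s A b (Sum.inr i) v * Y v = -Y (Sum.inr i) := by
  rw [Fintype.sum_sum_type]
  rw [show (∑ i' : Fin q, ineqRow d s A b (Sum.inr i) (Sum.inr i') * Y (Sum.inr i'))
      = ∑ i' : Fin q, (if i' = i then (-1 : ℝ) else 0) * Y (Sum.inr i') from rfl, sum_ind]
  simp [ineqRow]

/-- Characterization of membership in the Balas feasible region. -/
lemma mem_balas_iff :
    ((∀ u, ∑ v, eqRow d g Aeq beq u v * Y v = eqRhs g u)
      ∧ (∀ u, ∑ v, ineqRow d s A b u v * Y v ≤ 0))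
    ↔ ((∀ i, ∀ t, ∑ j, Aeq i t j * Y (Sum.inl ⟨i, j⟩) = Y (Sum.inr i) * beq i t)
        ∧ (∀ i, ∀ t, ∑ j, A i t j * Y (Sum.inl ⟨i, j⟩) ≤ Y (Sum.inr i) * b i t)
        ∧ (∑ i, Y (Sum.inr i)) = 1 ∧ (∀ i, 0 ≤ Y (Sum.inr i))) := by
  rw [Sum.forall (p := fun u => ∑ v, eqRow d g Aeq beq u v * Y v = eqRhs g u)]
  rw [Sum.forall (p := fun u => ∑ v, ineqRow d s A b u v * Y v ≤ 0)]
  rw [Sigma.forall, Sigma.forall]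
  constructor
  · rintro ⟨⟨h1, h2⟩, h3, h4⟩
    refine ⟨fun i t => ?_, fun i t => ?_, ?_, fun i => ?_⟩
    · have := h1 i t; rw [eqRow_inl_sum] at this
      have h0 : eqRhs g (Sum.inl ⟨i, t⟩) = 0 := rfl
      rw [h0, sub_eq_zero] at this
      rw [this]; ring
    · have := h3 i t; rw [ineqRow_inl_sum] at this
      have := sub_nonpos.mp this
      linarith [this, mul_comm (b i t) (Y (Sum.inr i))]
    · have := h2 (); rw [eqRow_inr_sum] at this
      exact this
    · have := h4 i; rw [ineqRow_inr_sum] at this; linarith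
  · rintro ⟨h1, h2, h3, h4⟩
    refine ⟨⟨fun i t => ?_, fun u => ?_⟩, fun i t => ?_, fun i => ?_⟩
    · rw [eqRow_inl_sum, h1 i t]
      show Y (Sum.inr i) * beq i t - beq i t * Y (Sum.inr i) = 0
      ring
    · rw [eqRow_inr_sum, h3]; rfl
    · rw [ineqRow_inl_sum]
      have := h2 i t
      linarith [mul_comm (b i t) (Y (Sum.inr i))]
    · rw [ineqRow_inr_sum]; linarith [h4 i]

end Rows

end BalasAux

section Main

theorem balas_aux {m q : ℕ} (d g s : Fin q → ℕ)
    (Aeq : ∀ i, Fin (g i) → Fin (d i) → ℝ) (beq : ∀ i, Fin (g i) → ℝ)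
    (A : ∀ i, Fin (s i) → Fin (d i) → ℝ) (b : ∀ i, Fin (s i) → ℝ)
    (p : ∀ i, (Fin (d i) → ℝ) →ᵃ[ℝ] (Fin m → ℝ))
    (P : Fin q → Set (Fin m → ℝ))
    (hp : ∀ i, p i '' {y : Fin (d i) → ℝ | (∀ t, ∑ j, Aeq i t j * y j = beq i t) ∧
        (∀ t, ∑ j, A i t j * y j ≤ b i t)} = P i)
    (hne : ∀ i, (P i).Nonempty) (hbdd : ∀ i, Bornology.IsBounded (P i)) :
    (bigLin d p).toAffineMap ''
      {Y : ((Σ i : Fin q, Fin (d i)) ⊕ Fin q) → ℝ |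
        (∀ u, ∑ v, eqRow d g Aeq beq u v * Y v = eqRhs g u)
        ∧ (∀ u, ∑ v, ineqRow d s A b u v * Y v ≤ 0)}
      = convexHull ℝ (⋃ i, P i) := by
  classical
  apply Set.Subset.antisymm
  · rintro x ⟨Y, hY, rfl⟩
    rw [Set.mem_setOf_eq, mem_balas_iff] at hY
    obtain ⟨heq, hineq, hsum, hnn⟩ := hY
    have key : ∀ i : Fin q, ∃ z ∈ P i,
        (p i).linear (fun j => Y (Sum.inl ⟨i, j⟩)) + Y (Sum.inr i) • (p i 0)
          = Y (Sum.inr i) • z := by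
      intro i
      have fdec : ∀ y, p i y = (p i).linear y + p i 0 :=
        fun y => congrFun (AffineMap.decomp (p i)) y
      rcases eq_or_lt_of_le (hnn i) with h0 | hpos
      · -- `λ i = 0` : the recession direction maps to `0`
        obtain ⟨x₀, hx₀⟩ := hne i
        refine ⟨x₀, hx₀, ?_⟩
        have hlin : (p i).linear (fun j => Y (Sum.inl ⟨i, j⟩)) = 0 := by
          obtain ⟨x₁, hx₁⟩ := hne i
          rw [← hp i] at hx₁
          obtain ⟨y₀, hy₀, hpy₀⟩ := hx₁
          set w := (p i).linear (fun j => Y (Sum.inl ⟨i, j⟩)) with hw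
          have hmem : ∀ t : ℝ, 0 ≤ t → (p i) y₀ + t • w ∈ P i := by
            intro t ht
            rw [← hp i]
            refine ⟨y₀ + t • (fun j => Y (Sum.inl ⟨i, j⟩)), ⟨?_, ?_⟩, ?_⟩
            · intro t'
              have e1 := hy₀.1 t'
              have e2 := heq i t'
              rw [← h0, zero_mul] at e2
              have hexp : ∑ j, Aeq i t' j * (y₀ + t • fun j => Y (Sum.inl ⟨i, j⟩)) j
                  = (∑ j, Aeq i t' j * y₀ j)
                    + t * ∑ j, Aeq i t' j * Y (Sum.inl ⟨i, j⟩) := by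
                rw [Finset.mul_sum, ← Finset.sum_add_distrib]
                refine Finset.sum_congr rfl fun j _ => ?_
                simp only [Pi.add_apply, Pi.smul_apply, smul_eq_mul]; ring
              rw [hexp, e1, e2, mul_zero, add_zero]
            · intro t'
              have e1 := hy₀.2 t'
              have e2 := hineq i t'
              rw [← h0, zero_mul] at e2
              have hexp : ∑ j, A i t' j * (y₀ + t • fun j => Y (Sum.inl ⟨i, j⟩)) j
                  = (∑ j, A i t' j * y₀ j)
                    + t * ∑ j, A i t' j * Y (Sum.inl ⟨i, j⟩) := by
                rw [Finset.mul_sum, ← Finset.sum_add_distrib]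
                refine Finset.sum_congr rfl fun j _ => ?_
                simp only [Pi.add_apply, Pi.smul_apply, smul_eq_mul]; ring
              rw [hexp]
              nlinarith
            · rw [fdec, map_add, map_smul, fdec y₀, hw]
              abel
          obtain ⟨C, hC⟩ := isBounded_iff_forall_norm_le.mp (hbdd i)
          by_contra hw0
          have hwpos : 0 < ‖w‖ := norm_pos_iff.mpr hw0
          set t : ℝ := (C + ‖(p i) y₀‖ + 1) / ‖w‖ with htdef
          have hC0 : 0 ≤ C := le_trans (norm_nonneg _) (hC _ (hmem 0 le_rfl))
          have ht : 0 ≤ t := by positivity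
          have h1 : ‖(p i) y₀ + t • w‖ ≤ C := hC _ (hmem t ht)
          have h2 : ‖t • w‖ ≤ ‖(p i) y₀ + t • w‖ + ‖(p i) y₀‖ := by
            have := norm_add_le ((p i) y₀ + t • w) (-(p i) y₀)
            simpa using this
          have h3 : ‖t • w‖ = C + ‖(p i) y₀‖ + 1 := by
            rw [norm_smul, Real.norm_of_nonneg ht, htdef, div_mul_cancel₀ _ (ne_of_gt hwpos)]
          linarith
        rw [hlin, ← h0]
        simp
      · -- `λ i > 0` : rescale
        have hne0 : Y (Sum.inr i) ≠ 0 := ne_of_gt hpos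
        set yb : Fin (d i) → ℝ := fun j => Y (Sum.inl ⟨i, j⟩) with hyb
        set w : Fin (d i) → ℝ := (Y (Sum.inr i))⁻¹ • yb with hwdef
        have hsc : ∀ (c : Fin (d i) → ℝ),
            ∑ j, c j * w j = (Y (Sum.inr i))⁻¹ * ∑ j, c j * yb j := by
          intro c
          rw [Finset.mul_sum]
          refine Finset.sum_congr rfl fun j _ => ?_
          simp only [hwdef, Pi.smul_apply, smul_eq_mul]; ring
        have hwQ : (∀ t, ∑ j, Aeq i t j * w j = beq i t) ∧
            (∀ t, ∑ j, A i t j * w j ≤ b i t) := by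
          constructor
          · intro t
            rw [hsc, heq i t, inv_mul_cancel_left₀ hne0]
          · intro t
            rw [hsc]
            calc (Y (Sum.inr i))⁻¹ * ∑ j, A i t j * yb j
                ≤ (Y (Sum.inr i))⁻¹ * (Y (Sum.inr i) * b i t) :=
                  mul_le_mul_of_nonneg_left (hineq i t) (inv_nonneg.mpr (le_of_lt hpos))
              _ = b i t := inv_mul_cancel_left₀ hne0 _
        refine ⟨p i w, ?_, ?_⟩
        · rw [← hp i]; exact ⟨w, hwQ, rfl⟩
        · rw [fdec w, hwdef, map_smul, smul_add, smul_smul,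
            mul_inv_cancel₀ hne0, one_smul]
    choose z hzP hzkey using key
    have himg : (bigLin d p).toAffineMap Y = ∑ i, Y (Sum.inr i) • z i := by
      rw [LinearMap.coe_toAffineMap, bigLin_apply]
      exact Finset.sum_congr rfl fun i _ => hzkey i
    rw [himg]
    have hc := Finset.centerMass_mem_convexHull (univ : Finset (Fin q))
      (fun i _ => hnn i) (by rw [hsum]; exact one_pos)
      (fun i _ => Set.mem_iUnion.mpr ⟨i, hzP i⟩)
    rwa [Finset.centerMass, hsum, inv_one, one_smul] at hc
  · apply convexHull_min
    · rintro x hx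
      rw [Set.mem_iUnion] at hx
      obtain ⟨i, hxi⟩ := hx
      rw [← hp i] at hxi
      obtain ⟨y, hy, rfl⟩ := hxi
      set Yinl : ∀ i', Fin (d i') → ℝ :=
        fun i' j => if h : i' = i then y (Fin.cast (congrArg d h) j) else 0 with hYinl
      have hYii : ∀ j, Yinl i j = y j := by
        intro j
        simp only [hYinl, dif_pos]
        exact congrArg y (Fin.ext rfl)
      have hYne : ∀ i', i' ≠ i → ∀ j, Yinl i' j = 0 := by
        intro i' h j; simp [hYinl, h]
      refine ⟨Sum.elim (fun x : Σ i', Fin (d i') => Yinl x.1 x.2)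
        (fun i' => if i' = i then 1 else 0), ?_, ?_⟩
      · rw [Set.mem_setOf_eq, mem_balas_iff]
        refine ⟨fun i' t => ?_, fun i' t => ?_, ?_, fun i' => ?_⟩
        · by_cases h : i' = i
          · subst h
            simp only [Sum.elim_inl, Sum.elim_inr, if_pos rfl]
            rw [Finset.sum_congr rfl fun j _ => by rw [show Yinl i' j = y j from hYii j]]
            rw [hy.1 t]
            simp
          · simp only [Sum.elim_inl, Sum.elim_inr, if_neg h]
            rw [Finset.sum_congr rfl fun j _ => by rw [hYne i' h j]]
            simp
        · by_cases h : i' = i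
          · subst h
            simp only [Sum.elim_inl, Sum.elim_inr, if_pos rfl]
            rw [Finset.sum_congr rfl fun j _ => by rw [show Yinl i' j = y j from hYii j]]
            simpa using hy.2 t
          · simp only [Sum.elim_inl, Sum.elim_inr, if_neg h]
            rw [Finset.sum_congr rfl fun j _ => by rw [hYne i' h j]]
            simp
        · simp
        · simp only [Sum.elim_inr]
          split <;> norm_num
      · rw [LinearMap.coe_toAffineMap, bigLin_apply]
        rw [Finset.sum_eq_single i (fun i' _ h => ?_) (fun h => absurd (mem_univ i) h)]
        · simp only [Sum.elim_inl, Sum.elim_inr, if_pos rfl]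
          have : (fun j => Yinl i j) = y := funext hYii
          rw [this, if_pos trivial, one_smul]
          exact ((congrFun (AffineMap.decomp (p i)) y)).symm
        · simp only [Sum.elim_inl, Sum.elim_inr, if_neg h]
          have : (fun j => Yinl i' j) = 0 := funext fun j => hYne i' h j
          rw [this, map_zero, zero_smul, add_zero]
    · refine Convex.affine_image _ ?_
      intro Y hY Z hZ a c ha hc hac
      obtain ⟨hY1, hY2⟩ := hY
      obtain ⟨hZ1, hZ2⟩ := hZ
      have expand : ∀ (R : ((Σ i : Fin q, Fin (d i)) ⊕ Fin q) → ℝ),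
          ∑ v, R v * (a • Y + c • Z) v
            = a * (∑ v, R v * Y v) + c * (∑ v, R v * Z v) := by
        intro R
        rw [Finset.mul_sum, Finset.mul_sum, ← Finset.sum_add_distrib]
        refine Finset.sum_congr rfl fun v _ => ?_
        simp only [Pi.add_apply, Pi.smul_apply, smul_eq_mul]; ring
      constructor
      · intro u
        rw [expand, hY1 u, hZ1 u, ← add_mul, hac, one_mul]
      · intro u
        rw [expand]
        have h1 := mul_le_mul_of_nonneg_left (hY2 u) ha
        have h2 := mul_le_mul_of_nonneg_left (hZ2 u) hc
        nlinarith

/-- Transferring a linear description along equivalences of the index types. -/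
lemma image_reindex {m : ℕ} {V E I : Type*} [Fintype V] [Fintype E] [Fintype I]
    {D G F : ℕ} (eV : Fin D ≃ V) (eE : Fin G ≃ E) (eI : Fin F ≃ I)
    (M : E → V → ℝ) (r : E → ℝ) (N : I → V → ℝ) (c : I → ℝ)
    (p0 : (V → ℝ) →ᵃ[ℝ] (Fin m → ℝ)) :
    (p0.comp (LinearMap.funLeft ℝ ℝ eV.symm).toAffineMap) ''
      {y : Fin D → ℝ | (∀ t, ∑ j, M (eE t) (eV j) * y j = r (eE t))
        ∧ (∀ t, ∑ j, N (eI t) (eV j) * y j ≤ c (eI t))}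
    = p0 '' {Y : V → ℝ | (∀ u, ∑ v, M u v * Y v = r u) ∧ (∀ u, ∑ v, N u v * Y v ≤ c u)} := by
  classical
  ext x
  constructor
  · rintro ⟨y, ⟨h1, h2⟩, rfl⟩
    refine ⟨y ∘ eV.symm, ⟨?_, ?_⟩, rfl⟩
    · intro u
      have := h1 (eE.symm u)
      rw [eE.apply_symm_apply] at this
      rw [← this, ← Equiv.sum_comp eV (fun v => M u v * (y ∘ eV.symm) v)]
      refine Finset.sum_congr rfl fun j _ => ?_
      simp
    · intro u
      have := h2 (eI.symm u)
      rw [eI.apply_symm_apply] at this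
      refine le_trans (le_of_eq ?_) this
      rw [← Equiv.sum_comp eV (fun v => N u v * (y ∘ eV.symm) v)]
      refine Finset.sum_congr rfl fun j _ => ?_
      simp
  · rintro ⟨Y, ⟨h1, h2⟩, rfl⟩
    have hYV : (Y ∘ eV) ∘ eV.symm = Y := by
      funext v; simp
    refine ⟨Y ∘ eV, ⟨?_, ?_⟩, ?_⟩
    · intro t
      rw [← h1 (eE t), ← Equiv.sum_comp eV (fun v => M (eE t) v * Y v)]
      rfl
    · intro t
      refine le_trans (le_of_eq ?_) (h2 (eI t))
      rw [← Equiv.sum_comp eV (fun v => N (eI t) v * Y v)]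
      rfl
    · exact congrArg p0 hYV

end Main

open scoped BigOperators

/-- Balas; Lemma 4.4.  If the nonempty polytopes `P_1, …, P_q ⊆ ℝ^m`
have extensions `Q_i ⊆ ℝ^{d_i}` of size `s_i` (here: `Q_i` is described by linear
equations together with `s_i` linear inequalities, which is possible whenever `Q_i` is
a polyhedron with at most `s_i` facets), then `conv(P_1 ∪ ⋯ ∪ P_q)` has an extension
of size at most `∑ (s_i + 1)`. -/
theorem statement14 (m q : ℕ) (P : Fin q → Set (Fin m → ℝ))
    (hpoly : ∀ i, ∃ X : Finset (Fin m → ℝ),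
      X.Nonempty ∧ P i = convexHull ℝ (X : Set (Fin m → ℝ)))
    (s : Fin q → ℕ)
    (hext : ∀ i, ∃ (d g : ℕ) (Aeq : Fin g → Fin d → ℝ) (beq : Fin g → ℝ)
        (A : Fin (s i) → Fin d → ℝ) (b : Fin (s i) → ℝ)
        (p : (Fin d → ℝ) →ᵃ[ℝ] (Fin m → ℝ)),
      p '' {y : Fin d → ℝ |
          (∀ t : Fin g, ∑ j, Aeq t j * y j = beq t) ∧
          (∀ t : Fin (s i), ∑ j, A t j * y j ≤ b t)} = P i) :
    ∃ (d g f : ℕ) (Aeq : Fin g → Fin d → ℝ) (beq : Fin g → ℝ)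
      (A : Fin f → Fin d → ℝ) (b : Fin f → ℝ)
      (p : (Fin d → ℝ) →ᵃ[ℝ] (Fin m → ℝ)),
      f ≤ ∑ i, (s i + 1) ∧
      p '' {y : Fin d → ℝ |
          (∀ t : Fin g, ∑ j, Aeq t j * y j = beq t) ∧
          (∀ t : Fin f, ∑ j, A t j * y j ≤ b t)} = convexHull ℝ (⋃ i, P i) := by
  classical
  choose dd gg Aeq beq A b p hp using hext
  have hne : ∀ i, (P i).Nonempty := by
    intro i
    obtain ⟨X, hX, hPX⟩ := hpoly i
    obtain ⟨x, hx⟩ := hX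
    exact ⟨x, hPX ▸ subset_convexHull ℝ _ hx⟩
  have hbdd : ∀ i, Bornology.IsBounded (P i) := by
    intro i
    obtain ⟨X, hX, hPX⟩ := hpoly i
    rw [hPX]
    exact isBounded_convexHull.mpr X.finite_toSet.isBounded
  have hcard : Fintype.card ((Σ i : Fin q, Fin (s i)) ⊕ Fin q) = ∑ i, (s i + 1) := by
    simp [Fintype.card_sigma, Finset.sum_add_distrib]
  set D := Fintype.card ((Σ i : Fin q, Fin (dd i)) ⊕ Fin q) with hD
  set G := Fintype.card ((Σ i : Fin q, Fin (gg i)) ⊕ Unit) with hG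
  set eV : Fin D ≃ ((Σ i : Fin q, Fin (dd i)) ⊕ Fin q) := (Fintype.equivFin _).symm with heV
  set eE : Fin G ≃ ((Σ i : Fin q, Fin (gg i)) ⊕ Unit) := (Fintype.equivFin _).symm with heE
  set eI : Fin (∑ i, (s i + 1)) ≃ ((Σ i : Fin q, Fin (s i)) ⊕ Fin q) :=
    (Fintype.equivFinOfCardEq hcard).symm with heI
  refine ⟨D, G, ∑ i, (s i + 1),
    fun t j => eqRow dd gg Aeq beq (eE t) (eV j),
    fun t => eqRhs gg (eE t),
    fun t j => ineqRow dd s A b (eI t) (eV j),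
    fun _ => 0,
    ((bigLin dd p).toAffineMap).comp (LinearMap.funLeft ℝ ℝ eV.symm).toAffineMap,
    le_refl _, ?_⟩
  rw [image_reindex eV eE eI (eqRow dd gg Aeq beq) (eqRhs gg) (ineqRow dd s A b) (fun _ => 0)]
  exact balas_aux dd gg s Aeq beq A b p P hp hne hbdd
end

section
/- Let n ≥ 3 and let x ∈ ℝ^{E_n} and z = (z_{e,v,u}), indexed by triples with e ∈ E_n, v ∈ e, u ∈ [n]∖e, satisfy: x ≥ 0, z ≥ 0, x_{{v,w}} − z_{{v,w},v,u} − z_{{v,w},w,u} = 0 for all pairwise distinct v, w, u ∈ [n], and x_{{v,w}} + ∑_{u ∈ [n]∖{v,w}} z_{{v,u},u,w} = 1 for all distinct v, w ∈ [n]. Then for every subset S ⊆ [n] with 2 ≤ |S|, one has x(E_n(S)) ≤ |S| − 1, where x(E_n(S)) = ∑_{e ∈ E_n(S)} x_e. -/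
open scoped BigOperators
open Classical in
noncomputable section

/-- Edges of the complete graph `K_n` on the node set `Fin n`. -/
abbrev Edge (n : ℕ) := {e : Sym2 (Fin n) // ¬ e.IsDiag}

/-- The edge `{v,w}` of `K_n`, for distinct nodes `v ≠ w`. -/
def mkEdge {n : ℕ} (v w : Fin n) (h : v ≠ w) : Edge n :=
  ⟨s(v, w), by simpa using h⟩

theorem mkEdge_symm {n : ℕ} (v w : Fin n) (h : v ≠ w) :
    mkEdge v w h = mkEdge w v h.symm :=
  Subtype.ext Sym2.eq_swap

/-- Nested sums over distinct pairs versus sums over sorted pairs. -/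
theorem pair_sum_helper {n : ℕ} (T : Finset (Fin n)) (h : Fin n → Fin n → ℝ) :
    ∑ v ∈ T, ∑ w ∈ T.erase v, h v w
      = ∑ p ∈ (T ×ˢ T).filter (fun p => p.1 < p.2), (h p.1 p.2 + h p.2 p.1) := by
  classical
  have A : ∑ v ∈ T, ∑ w ∈ T.erase v, h v w
      = ∑ p ∈ (T ×ˢ T).filter (fun p => p.1 ≠ p.2), h p.1 p.2 := by
    rw [Finset.sum_filter, Finset.sum_product]
    refine Finset.sum_congr rfl fun v hv => ?_
    rw [← Finset.filter_ne T v, Finset.sum_filter]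
  have B1 : ((T ×ˢ T).filter (fun p => p.1 ≠ p.2)).filter (fun p => p.1 < p.2)
      = (T ×ˢ T).filter (fun p => p.1 < p.2) := by
    rw [Finset.filter_filter]
    exact Finset.filter_congr fun p _ => by
      constructor
      · exact fun hp => hp.2
      · exact fun hp => ⟨ne_of_lt hp, hp⟩
  have B2 : ((T ×ˢ T).filter (fun p => p.1 ≠ p.2)).filter (fun p => ¬ p.1 < p.2)
      = (T ×ˢ T).filter (fun p => p.2 < p.1) := by
    rw [Finset.filter_filter]
    exact Finset.filter_congr fun p _ => by
      constructor
      · exact fun hp => lt_of_le_of_ne (not_lt.mp hp.2) hp.1.symm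
      · exact fun hp => ⟨(ne_of_lt hp).symm, not_lt.mpr (le_of_lt hp)⟩
  have C : ∑ p ∈ (T ×ˢ T).filter (fun p => p.2 < p.1), h p.1 p.2
      = ∑ p ∈ (T ×ˢ T).filter (fun p => p.1 < p.2), h p.2 p.1 := by
    refine Finset.sum_nbij' Prod.swap Prod.swap ?_ ?_ ?_ ?_ ?_
    · intro p hp
      simp only [Finset.mem_filter, Finset.mem_product] at hp ⊢
      exact ⟨⟨hp.1.2, hp.1.1⟩, hp.2⟩
    · intro p hp
      simp only [Finset.mem_filter, Finset.mem_product] at hp ⊢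
      exact ⟨⟨hp.1.2, hp.1.1⟩, hp.2⟩
    · intro p _; rfl
    · intro p _; rfl
    · intro p _; rfl
  rw [A, ← Finset.sum_filter_add_sum_filter_not ((T ×ˢ T).filter (fun p => p.1 ≠ p.2))
      (fun p => p.1 < p.2), B1, B2, C, ← Finset.sum_add_distrib]

/-- validity of the extended formulation of the spanning tree
polytope.  Let `n ≥ 3`, let `x ∈ ℝ^{E_n}` and let `z v w u` (for pairwise distinct
`v, w, u`) stand for `z_{{v,w},v,u}` (edge `{v,w}`, chosen endpoint `v`, outside node
`u`).  If `x ≥ 0`, `z ≥ 0`,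
`x_{{v,w}} − z_{{v,w},v,u} − z_{{v,w},w,u} = 0` for pairwise distinct `v,w,u`, and
`x_{{v,w}} + ∑_{u∉{v,w}} z_{{v,u},u,w} = 1` for distinct `v,w`, then
`x(E_n(S)) ≤ |S| − 1` for every `S ⊆ [n]` with `|S| ≥ 2`. -/
theorem statement18 (n : ℕ) (hn : 3 ≤ n)
    (x : Edge n → ℝ) (z : Fin n → Fin n → Fin n → ℝ)
    (hx : ∀ e, 0 ≤ x e)
    (hz : ∀ v w u : Fin n, v ≠ w → w ≠ u → v ≠ u → 0 ≤ z v w u)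
    (heq1 : ∀ v w u : Fin n, ∀ (hvw : v ≠ w), w ≠ u → v ≠ u →
      x (mkEdge v w hvw) - z v w u - z w v u = 0)
    (heq2 : ∀ v w : Fin n, ∀ (hvw : v ≠ w),
      x (mkEdge v w hvw) +
        ∑ u ∈ Finset.univ.filter (fun u : Fin n => u ≠ v ∧ u ≠ w), z u v w = 1) :
    ∀ S : Finset (Fin n), 2 ≤ S.card →
      ∑ e ∈ Finset.univ.filter (fun e : Edge n => ∀ v ∈ e.1, v ∈ S), x e
        ≤ (S.card : ℝ) - 1 := by
  classical
  intro S hS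
  obtain ⟨t, ht⟩ : S.Nonempty := Finset.card_pos.mp (by omega)
  set T := S.erase t with hTdef
  -- the symmetric extension of `x` to ordered pairs
  set g : Fin n → Fin n → ℝ := fun v w => if h : v ≠ w then x (mkEdge v w h) else 0 with hg
  have hgval : ∀ (v w : Fin n) (h : v ≠ w), g v w = x (mkEdge v w h) := by
    intro v w h; simp [hg, h]
  have gsymm : ∀ v w, g v w = g w v := by
    intro v w
    by_cases h : v = w
    · subst h; rfl
    · rw [hgval v w h, hgval w v (Ne.symm h), mkEdge_symm]
  -- Step 1: the edge sum equals the sum over sorted pairs.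
  have step1 : ∑ p ∈ (S ×ˢ S).filter (fun p => p.1 < p.2), g p.1 p.2
      = ∑ e ∈ Finset.univ.filter (fun e : Edge n => ∀ v ∈ e.1, v ∈ S), x e := by
    refine Finset.sum_bij
      (fun p hp => mkEdge p.1 p.2 (ne_of_lt (Finset.mem_filter.mp hp).2)) ?_ ?_ ?_ ?_
    · intro p hp
      obtain ⟨hmem, -⟩ := Finset.mem_filter.mp hp
      obtain ⟨h1, h2⟩ := Finset.mem_product.mp hmem
      simp only [Finset.mem_filter, Finset.mem_univ, true_and, mkEdge]
      intro v hv
      rcases Sym2.mem_iff.mp hv with rfl | rfl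
      · exact h1
      · exact h2
    · intro p hp q hq hpq
      have h1 : p.1 < p.2 := (Finset.mem_filter.mp hp).2
      have h2 : q.1 < q.2 := (Finset.mem_filter.mp hq).2
      have : s(p.1, p.2) = s(q.1, q.2) := congrArg Subtype.val hpq
      rw [Sym2.eq_iff] at this
      rcases this with ⟨ha, hb⟩ | ⟨ha, hb⟩
      · exact Prod.ext ha hb
      · exfalso; rw [ha, hb] at h1; exact absurd (h1.trans h2) (lt_irrefl _)
    · intro e he
      simp only [Finset.mem_filter, Finset.mem_univ, true_and] at he
      have hkey : s(e.1.inf, e.1.sup) = e.1 := by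
        have := (Sym2.sortEquiv (α := Fin n)).symm_apply_apply e.1
        simpa [Sym2.sortEquiv] using this
      have hne : e.1.inf ≠ e.1.sup := by
        intro hcon
        apply e.2
        rw [← hkey, hcon]
        exact Sym2.mk_isDiag_iff.mpr rfl
      have hlt : e.1.inf < e.1.sup := lt_of_le_of_ne (Sym2.inf_le_sup e.1) hne
      have hmem1 : e.1.inf ∈ S := he _ (by
        have h := Sym2.mem_mk_left e.1.inf e.1.sup; rwa [hkey] at h)
      have hmem2 : e.1.sup ∈ S := he _ (by
        have h := Sym2.mem_mk_right e.1.inf e.1.sup; rwa [hkey] at h)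
      refine ⟨(e.1.inf, e.1.sup), ?_, ?_⟩
      · exact Finset.mem_filter.mpr ⟨Finset.mem_product.mpr ⟨hmem1, hmem2⟩, hlt⟩
      · exact Subtype.ext hkey
    · intro p hp
      exact hgval p.1 p.2 (ne_of_lt (Finset.mem_filter.mp hp).2)
  -- Step 2: split off the pairs containing `t`.
  have step2 : ∑ p ∈ (S ×ˢ S).filter (fun p => p.1 < p.2), g p.1 p.2
      = ∑ p ∈ (T ×ˢ T).filter (fun p => p.1 < p.2), g p.1 p.2 + ∑ v ∈ T, g v t := by
    rw [← Finset.sum_filter_add_sum_filter_not ((S ×ˢ S).filter (fun p => p.1 < p.2))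
        (fun p => p.1 ≠ t ∧ p.2 ≠ t)]
    congr 1
    · apply Finset.sum_congr
      · ext p
        simp only [Finset.mem_filter, Finset.mem_product, Finset.mem_erase, hTdef]
        tauto
      · intros; rfl
    · refine Finset.sum_bij (fun p _ => if p.1 = t then p.2 else p.1) ?_ ?_ ?_ ?_
      · intro p hp
        simp only [Finset.mem_filter, Finset.mem_product, not_and_or, not_not] at hp
        obtain ⟨⟨⟨h1S, h2S⟩, hlt⟩, hcase⟩ := hp
        by_cases h1 : p.1 = t
        · rw [if_pos h1]
          refine Finset.mem_erase.mpr ⟨?_, h2S⟩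
          rw [← h1]; exact (ne_of_lt hlt).symm
        · rw [if_neg h1]
          have h2 : p.2 = t := by tauto
          refine Finset.mem_erase.mpr ⟨?_, h1S⟩
          rw [← h2]; exact ne_of_lt hlt
      · intro p hp q hq hpq
        simp only [Finset.mem_filter, Finset.mem_product, not_and_or, not_not] at hp hq
        obtain ⟨⟨⟨hp1S, hp2S⟩, hplt⟩, hpcase⟩ := hp
        obtain ⟨⟨⟨hq1S, hq2S⟩, hqlt⟩, hqcase⟩ := hq
        by_cases h1 : p.1 = t <;> by_cases h2 : q.1 = t
        · rw [if_pos h1, if_pos h2] at hpq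
          exact Prod.ext (h1.trans h2.symm) hpq
        · rw [if_pos h1, if_neg h2] at hpq
          exfalso
          have hq2t : q.2 = t := by tauto
          rw [← hpq] at hqlt
          rw [h1] at hplt
          rw [hq2t] at hqlt
          exact absurd (hplt.trans hqlt) (lt_irrefl _)
        · rw [if_neg h1, if_pos h2] at hpq
          exfalso
          have hp2t : p.2 = t := by tauto
          rw [hpq] at hplt
          rw [h2] at hqlt
          rw [hp2t] at hplt
          exact absurd (hqlt.trans hplt) (lt_irrefl _)
        · rw [if_neg h1, if_neg h2] at hpq
          have hp2t : p.2 = t := by tauto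
          have hq2t : q.2 = t := by tauto
          exact Prod.ext hpq (hp2t.trans hq2t.symm)
      · intro v hv
        obtain ⟨hvt, hvS⟩ := Finset.mem_erase.mp hv
        rcases lt_or_gt_of_ne hvt with hlt | hgt
        · refine ⟨(v, t), ?_, ?_⟩
          · simp only [Finset.mem_filter, Finset.mem_product, not_and_or, not_not]
            refine ⟨⟨⟨hvS, ht⟩, hlt⟩, ?_⟩; tauto
          · simp [hvt]
        · refine ⟨(t, v), ?_, ?_⟩
          · simp only [Finset.mem_filter, Finset.mem_product, not_and_or, not_not]
            refine ⟨⟨⟨ht, hvS⟩, hgt⟩, ?_⟩; tauto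
          · simp
      · intro p hp
        simp only [Finset.mem_filter, Finset.mem_product, not_and_or, not_not] at hp
        obtain ⟨⟨⟨h1S, h2S⟩, hlt⟩, hcase⟩ := hp
        by_cases h1 : p.1 = t
        · rw [if_pos h1, h1]
          exact gsymm t p.2
        · have h2 : p.2 = t := by tauto
          rw [if_neg h1, h2]
  -- Step 3: inner pairs decompose via `heq1`.
  have step3 : ∑ p ∈ (T ×ˢ T).filter (fun p => p.1 < p.2), g p.1 p.2
      = ∑ p ∈ (T ×ˢ T).filter (fun p => p.1 < p.2), (z p.1 p.2 t + z p.2 p.1 t) := by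
    refine Finset.sum_congr rfl fun p hp => ?_
    obtain ⟨hmem, hlt⟩ := Finset.mem_filter.mp hp
    obtain ⟨h1, h2⟩ := Finset.mem_product.mp hmem
    have h1t : p.1 ≠ t := (Finset.mem_erase.mp h1).1
    have h2t : p.2 ≠ t := (Finset.mem_erase.mp h2).1
    have hne : p.1 ≠ p.2 := ne_of_lt hlt
    have := heq1 p.1 p.2 t hne h2t h1t
    rw [hgval p.1 p.2 hne]
    linarith
  -- Step 4: bound on the edges incident to `t` via `heq2`.
  have step4 : ∑ v ∈ T, g v t
      ≤ (T.card : ℝ) - ∑ v ∈ T, ∑ w ∈ T.erase v, z w v t := by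
    have key : ∀ v ∈ T, g v t ≤ 1 - ∑ w ∈ T.erase v, z w v t := by
      intro v hv
      obtain ⟨hvt, hvS⟩ := Finset.mem_erase.mp hv
      have h2 := heq2 v t hvt
      have hsub : T.erase v ⊆ Finset.univ.filter (fun u : Fin n => u ≠ v ∧ u ≠ t) := by
        intro w hw
        obtain ⟨hwv, hwT⟩ := Finset.mem_erase.mp hw
        obtain ⟨hwt, -⟩ := Finset.mem_erase.mp hwT
        exact Finset.mem_filter.mpr ⟨Finset.mem_univ _, hwv, hwt⟩
      have hle : ∑ w ∈ T.erase v, z w v t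
          ≤ ∑ u ∈ Finset.univ.filter (fun u : Fin n => u ≠ v ∧ u ≠ t), z u v t := by
        refine Finset.sum_le_sum_of_subset_of_nonneg hsub ?_
        intro u hu _
        obtain ⟨-, huv, hut⟩ := Finset.mem_filter.mp hu
        exact hz u v t huv hvt hut
      rw [hgval v t hvt]
      linarith
    calc ∑ v ∈ T, g v t ≤ ∑ v ∈ T, (1 - ∑ w ∈ T.erase v, z w v t) :=
          Finset.sum_le_sum key
      _ = (T.card : ℝ) - ∑ v ∈ T, ∑ w ∈ T.erase v, z w v t := by
          rw [Finset.sum_sub_distrib, Finset.sum_const, nsmul_eq_mul, mul_one]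
  -- Step 5: the two `z`-sums coincide.
  have step5 : ∑ v ∈ T, ∑ w ∈ T.erase v, z w v t
      = ∑ p ∈ (T ×ˢ T).filter (fun p => p.1 < p.2), (z p.1 p.2 t + z p.2 p.1 t) := by
    rw [pair_sum_helper T (fun v w => z w v t)]
    exact Finset.sum_congr rfl fun p _ => by ring
  -- cardinality bookkeeping
  have hTcard : (T.card : ℝ) = (S.card : ℝ) - 1 := by
    have : T.card + 1 = S.card := by
      rw [hTdef, Finset.card_erase_of_mem ht]
      omega
    have := congrArg (fun m : ℕ => (m : ℝ)) this
    push_cast at this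
    linarith
  rw [← step1, step2, step3]
  calc ∑ p ∈ (T ×ˢ T).filter (fun p => p.1 < p.2), (z p.1 p.2 t + z p.2 p.1 t)
        + ∑ v ∈ T, g v t
      ≤ ∑ p ∈ (T ×ˢ T).filter (fun p => p.1 < p.2), (z p.1 p.2 t + z p.2 p.1 t)
        + ((T.card : ℝ) - ∑ v ∈ T, ∑ w ∈ T.erase v, z w v t) := by linarith
    _ = (T.card : ℝ) := by rw [step5]; ring
    _ = (S.card : ℝ) - 1 := hTcard

end
end

section
/- Let n ≥ 2, let W ⊆ [n], and let M and M' be matchings in the complete graph K_n with |M| = |M'| and |W| < |M|. Let H = {π ∈ A_n : π(v) = v for all v ∈ W} be the group of even permutations of [n] fixing W pointwise, acting on matchings via π.M = {{π(v),π(w)} : {v,w} ∈ M}. Then M and M' lie in the same orbit under H if and only if M ∩ E_n(W) = M' ∩ E_n(W) and W ∖ V(M) = W ∖ V(M'), where V(M) denotes the set of nodes covered by M. -/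
open scoped BigOperators
open Classical in
noncomputable section

/-- Action of a node permutation on an edge: `π.{v,w} = {π v, π w}`. -/
def edgeMap {n : ℕ} (π : Equiv.Perm (Fin n)) (e : Edge n) : Edge n :=
  ⟨Sym2.map π e.1, by rw [Sym2.isDiag_map (Equiv.injective π)]; exact e.2⟩

/-- A matching: a set of pairwise node-disjoint edges. -/
def IsMatching {n : ℕ} (M : Finset (Edge n)) : Prop :=
  ∀ e ∈ M, ∀ f ∈ M, e ≠ f → ∀ v : Fin n, ¬(v ∈ e.1 ∧ v ∈ f.1)

variable {n : ℕ}

def emin (e : Edge n) : Fin n := Sym2.lift ⟨fun a b => min a b, fun a b => min_comm a b⟩ e.1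
def emax (e : Edge n) : Fin n := Sym2.lift ⟨fun a b => max a b, fun a b => max_comm a b⟩ e.1

lemma edge_spec (e : Edge n) : e.1 = s(emin e, emax e) ∧ emin e ≠ emax e := by
  obtain ⟨e, he⟩ := e
  induction e using Sym2.ind with
  | _ a b =>
    have hab : a ≠ b := by simpa [Sym2.mk_isDiag_iff] using he
    simp only [emin, emax, Sym2.lift_mk]
    rcases le_total a b with h | h
    · rw [min_eq_left h, max_eq_right h]; exact ⟨rfl, hab⟩
    · rw [min_eq_right h, max_eq_left h, Sym2.eq_swap]; exact ⟨rfl, hab.symm⟩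

lemma edge_eq (e : Edge n) : e.1 = s(emin e, emax e) := (edge_spec e).1
lemma emin_ne_emax (e : Edge n) : emin e ≠ emax e := (edge_spec e).2
lemma mem_edge {v : Fin n} {e : Edge n} : v ∈ e.1 ↔ v = emin e ∨ v = emax e := by
  conv_lhs => rw [edge_eq e]
  simp [Sym2.mem_iff]
lemma emin_mem (e : Edge n) : emin e ∈ e.1 := mem_edge.2 (Or.inl rfl)
lemma emax_mem (e : Edge n) : emax e ∈ e.1 := mem_edge.2 (Or.inr rfl)

lemma matching_unique {M : Finset (Edge n)} (hM : IsMatching M) {e f : Edge n}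
    (he : e ∈ M) (hf : f ∈ M) {v : Fin n} (hv : v ∈ e.1) (hv' : v ∈ f.1) : e = f := by
  by_contra h
  exact hM e he f hf h v ⟨hv, hv'⟩

/-- The endpoint in `W` (junk if none). -/
def inEnd (W : Finset (Fin n)) (e : Edge n) : Fin n :=
  if emin e ∈ W then emin e else emax e
/-- The endpoint outside `W` (junk if none). -/
def outEnd (W : Finset (Fin n)) (e : Edge n) : Fin n :=
  if emin e ∈ W then emax e else emin e

lemma inEnd_mem (W : Finset (Fin n)) (e : Edge n) : inEnd W e ∈ e.1 := by
  unfold inEnd; split <;> [exact emin_mem e; exact emax_mem e]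
lemma outEnd_mem (W : Finset (Fin n)) (e : Edge n) : outEnd W e ∈ e.1 := by
  unfold outEnd; split <;> [exact emax_mem e; exact emin_mem e]
lemma edge_eq' (W : Finset (Fin n)) (e : Edge n) : e.1 = s(inEnd W e, outEnd W e) := by
  unfold inEnd outEnd; split
  · exact edge_eq e
  · rw [Sym2.eq_swap]; exact edge_eq e
lemma inEnd_ne_outEnd (W : Finset (Fin n)) (e : Edge n) : inEnd W e ≠ outEnd W e := by
  unfold inEnd outEnd; split <;> [exact emin_ne_emax e; exact (emin_ne_emax e).symm]

/-- e is a "half" edge: exactly one endpoint in `W`; these are the relevant facts. -/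
lemma half_spec {W : Finset (Fin n)} {e : Edge n}
    (h1 : ¬ ∀ v ∈ e.1, v ∈ W) (h2 : ∃ v ∈ e.1, v ∈ W) :
    inEnd W e ∈ W ∧ outEnd W e ∉ W := by
  obtain ⟨v, hv, hvW⟩ := h2
  unfold inEnd outEnd
  rcases mem_edge.1 hv with rfl | rfl
  · rw [if_pos hvW, if_pos hvW]
    refine ⟨hvW, fun hmax => h1 ?_⟩
    intro u hu; rcases mem_edge.1 hu with rfl | rfl <;> assumption
  · by_cases hmin : emin e ∈ W
    · rw [if_pos hmin, if_pos hmin]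
      refine ⟨hmin, fun hmax => h1 ?_⟩
      intro u hu; rcases mem_edge.1 hu with rfl | rfl <;> assumption
    · rw [if_neg hmin, if_neg hmin]
      exact ⟨hvW, hmin⟩

lemma half_end_in {W : Finset (Fin n)} {e : Edge n}
    (h1 : ¬ ∀ v ∈ e.1, v ∈ W) {v : Fin n} (hv : v ∈ e.1) (hvW : v ∈ W) :
    v = inEnd W e := by
  have := half_spec h1 ⟨v, hv, hvW⟩
  rw [edge_eq' W e, Sym2.mem_iff] at hv
  rcases hv with rfl | rfl
  · rfl
  · exact absurd hvW this.2

lemma half_end_out {W : Finset (Fin n)} {e : Edge n}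
    (h2 : ∃ v ∈ e.1, v ∈ W) {v : Fin n} (hv : v ∈ e.1) (hvW : v ∉ W) :
    v = outEnd W e := by
  by_cases h1 : ∀ u ∈ e.1, u ∈ W
  · exact absurd (h1 v hv) hvW
  have := half_spec h1 h2
  rw [edge_eq' W e, Sym2.mem_iff] at hv
  rcases hv with rfl | rfl
  · exact absurd this.1 hvW
  · rfl

/-- The edge bijection `M → M'`: identity on full-`W` edges, match half edges by
their `W`-endpoint, `φ` on edges outside `W`. -/
noncomputable def gfun (W : Finset (Fin n)) (M' : Finset (Edge n)) (φ : Edge n → Edge n) (e : Edge n) : Edge n :=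
  if (∀ v ∈ e.1, v ∈ W) then e
  else if (∃ v ∈ e.1, v ∈ W) then
    (if h : ∃ e' ∈ M', inEnd W e ∈ e'.1 then h.choose else e)
  else φ e

section GLemmas
variable {W : Finset (Fin n)} {M M' : Finset (Edge n)} {φ : Edge n → Edge n}
  (hM : IsMatching M) (hM' : IsMatching M')
  (hAA' : M.filter (fun e : Edge n => ∀ v ∈ e.1, v ∈ W)
          = M'.filter (fun e : Edge n => ∀ v ∈ e.1, v ∈ W))
  (huncov : W.filter (fun v : Fin n => ∀ e ∈ M, v ∉ e.1)
          = W.filter (fun v : Fin n => ∀ e ∈ M', v ∉ e.1))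

lemma gA {e : Edge n} (hful : ∀ v ∈ e.1, v ∈ W) : gfun W M' φ e = e := by
  rw [gfun, if_pos hful]

include hAA' in
lemma gA_mem {e : Edge n} (he : e ∈ M) (hful : ∀ v ∈ e.1, v ∈ W) :
    gfun W M' φ e ∈ M' := by
  rw [gA hful]
  have : e ∈ M'.filter (fun e : Edge n => ∀ v ∈ e.1, v ∈ W) := by
    rw [← hAA']; exact Finset.mem_filter.2 ⟨he, hful⟩
  exact (Finset.mem_filter.1 this).1

include hM hAA' huncov in
lemma gB {e : Edge n} (he : e ∈ M) (hful : ¬ ∀ v ∈ e.1, v ∈ W)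
    (hex : ∃ v ∈ e.1, v ∈ W) :
    gfun W M' φ e ∈ M' ∧ inEnd W e ∈ (gfun W M' φ e).1 ∧
      ¬ (∀ v ∈ (gfun W M' φ e).1, v ∈ W) := by
  have hw : inEnd W e ∈ W := (half_spec hful hex).1
  have hwe : inEnd W e ∈ e.1 := inEnd_mem W e
  have hcov' : ∃ e' ∈ M', inEnd W e ∈ e'.1 := by
    by_contra hc
    push_neg at hc
    have : inEnd W e ∈ W.filter (fun v : Fin n => ∀ e ∈ M', v ∉ e.1) :=
      Finset.mem_filter.2 ⟨hw, hc⟩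
    rw [← huncov] at this
    exact (Finset.mem_filter.1 this).2 e he hwe
  rw [gfun, if_neg hful, if_pos hex, dif_pos hcov']
  obtain ⟨hmem, hin⟩ := hcov'.choose_spec
  refine ⟨hmem, hin, fun hful' => ?_⟩
  have : hcov'.choose ∈ M := by
    have : hcov'.choose ∈ M.filter (fun e : Edge n => ∀ v ∈ e.1, v ∈ W) := by
      rw [hAA']; exact Finset.mem_filter.2 ⟨hmem, hful'⟩
    exact (Finset.mem_filter.1 this).1
  exact hful (matching_unique hM he this hwe hin ▸ hful')

lemma gC {e : Edge n} (hnex : ¬ ∃ v ∈ e.1, v ∈ W) : gfun W M' φ e = φ e := by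
  have hful : ¬ ∀ v ∈ e.1, v ∈ W := fun h => hnex ⟨emin e, emin_mem e, h _ (emin_mem e)⟩
  rw [gfun, if_neg hful, if_neg hnex]

variable (hφmap : ∀ e ∈ M, (¬ ∃ v ∈ e.1, v ∈ W) →
    (φ e ∈ M' ∧ ¬ ∃ v ∈ (φ e).1, v ∈ W))
  (hφinj : ∀ e₁ ∈ M, ∀ e₂ ∈ M, (¬ ∃ v ∈ e₁.1, v ∈ W) → (¬ ∃ v ∈ e₂.1, v ∈ W) →
    φ e₁ = φ e₂ → e₁ = e₂)

include hM hAA' huncov hφmap in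
lemma g_mem {e : Edge n} (he : e ∈ M) : gfun W M' φ e ∈ M' := by
  by_cases hful : ∀ v ∈ e.1, v ∈ W
  · exact gA_mem hAA' he hful
  by_cases hex : ∃ v ∈ e.1, v ∈ W
  · exact (gB hM hAA' huncov he hful hex).1
  · rw [gC hex]; exact (hφmap e he hex).1

include hM hAA' huncov hφmap hφinj in
lemma g_inj {e₁ e₂ : Edge n} (h₁ : e₁ ∈ M) (h₂ : e₂ ∈ M)
    (heq : gfun W M' φ e₁ = gfun W M' φ e₂) : e₁ = e₂ := by
  by_cases hful₁ : ∀ v ∈ e₁.1, v ∈ W <;> by_cases hful₂ : ∀ v ∈ e₂.1, v ∈ W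
  · rw [gA hful₁, gA hful₂] at heq; exact heq
  · -- e₁ full, e₂ not
    rw [gA hful₁] at heq
    by_cases hex₂ : ∃ v ∈ e₂.1, v ∈ W
    · exact absurd (heq ▸ hful₁) (gB hM hAA' huncov h₂ hful₂ hex₂).2.2
    · rw [gC hex₂] at heq
      exact absurd ⟨emin e₁, heq ▸ (emin_mem (φ e₂)), hful₁ _ (heq ▸ emin_mem (φ e₂))⟩
        (heq ▸ (hφmap e₂ h₂ hex₂).2)
  · rw [gA hful₂] at heq
    by_cases hex₁ : ∃ v ∈ e₁.1, v ∈ W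
    · exact absurd (heq ▸ hful₂) (gB hM hAA' huncov h₁ hful₁ hex₁).2.2
    · rw [gC hex₁] at heq
      exact absurd ⟨emin e₂, heq ▸ (emin_mem (φ e₁)), hful₂ _ (heq ▸ emin_mem (φ e₁))⟩
        ((hφmap e₁ h₁ hex₁).2)
  · by_cases hex₁ : ∃ v ∈ e₁.1, v ∈ W <;> by_cases hex₂ : ∃ v ∈ e₂.1, v ∈ W
    · -- both half
      obtain ⟨hm₁, hin₁, hnf₁⟩ := gB (φ := φ) hM hAA' huncov h₁ hful₁ hex₁
      obtain ⟨hm₂, hin₂, hnf₂⟩ := gB (φ := φ) hM hAA' huncov h₂ hful₂ hex₂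
      have hw₁ : inEnd W e₁ ∈ W := (half_spec hful₁ hex₁).1
      have hw₂ : inEnd W e₂ ∈ W := (half_spec hful₂ hex₂).1
      have e1 : inEnd W e₁ = inEnd W (gfun W M' φ e₁) := half_end_in hnf₁ hin₁ hw₁
      have e2 : inEnd W e₂ = inEnd W (gfun W M' φ e₂) := half_end_in hnf₂ hin₂ hw₂
      have : inEnd W e₁ = inEnd W e₂ := by rw [e1, e2, heq]
      exact matching_unique hM h₁ h₂ (inEnd_mem W e₁) (this ▸ inEnd_mem W e₂)
    · obtain ⟨hm₁, hin₁, hnf₁⟩ := gB (φ := φ) hM hAA' huncov h₁ hful₁ hex₁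
      have hw₁ : inEnd W e₁ ∈ W := (half_spec hful₁ hex₁).1
      rw [gC hex₂] at heq
      exact absurd ⟨inEnd W e₁, heq ▸ hin₁, hw₁⟩ (hφmap e₂ h₂ hex₂).2
    · obtain ⟨hm₂, hin₂, hnf₂⟩ := gB (φ := φ) hM hAA' huncov h₂ hful₂ hex₂
      have hw₂ : inEnd W e₂ ∈ W := (half_spec hful₂ hex₂).1
      rw [gC hex₁] at heq
      exact absurd ⟨inEnd W e₂, heq ▸ hin₂, hw₂⟩ (hφmap e₁ h₁ hex₁).2
    · rw [gC hex₁, gC hex₂] at heq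
      exact hφinj e₁ h₁ e₂ h₂ hex₁ hex₂ heq

include hM hAA' huncov hφmap hφinj in
lemma g_image (hc : M.card = M'.card) : M.image (gfun W M' φ) = M' := by
  apply Finset.eq_of_subset_of_card_le
  · intro e' he'
    obtain ⟨e, he, rfl⟩ := Finset.mem_image.1 he'
    exact g_mem hM hAA' huncov hφmap he
  · rw [Finset.card_image_of_injOn (fun e₁ h₁ e₂ h₂ heq =>
      g_inj hM hAA' huncov hφmap hφinj h₁ h₂ heq), hc]

end GLemmas

/-- The node permutation: identity on `W`, per-edge map on covered nodes,
`ψ` on the rest. -/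
noncomputable def ffun (W : Finset (Fin n)) (M : Finset (Edge n))
    (g : Edge n → Edge n) (ψ : Fin n → Fin n) (v : Fin n) : Fin n :=
  if v ∈ W then v
  else if hv : ∃ e ∈ M, v ∈ e.1 then
    (if (∃ u ∈ hv.choose.1, u ∈ W) then outEnd W (g hv.choose)
     else if v = emin hv.choose then emin (g hv.choose) else emax (g hv.choose))
  else ψ v

section FLemmas
variable {W : Finset (Fin n)} {M M' : Finset (Edge n)} {φ : Edge n → Edge n}
  {ψ : Fin n → Fin n}
  (hM : IsMatching M) (hM' : IsMatching M')
  (hAA' : M.filter (fun e : Edge n => ∀ v ∈ e.1, v ∈ W)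
          = M'.filter (fun e : Edge n => ∀ v ∈ e.1, v ∈ W))
  (huncov : W.filter (fun v : Fin n => ∀ e ∈ M, v ∉ e.1)
          = W.filter (fun v : Fin n => ∀ e ∈ M', v ∉ e.1))
  (hφmap : ∀ e ∈ M, (¬ ∃ v ∈ e.1, v ∈ W) →
    (φ e ∈ M' ∧ ¬ ∃ v ∈ (φ e).1, v ∈ W))
  (hφinj : ∀ e₁ ∈ M, ∀ e₂ ∈ M, (¬ ∃ v ∈ e₁.1, v ∈ W) → (¬ ∃ v ∈ e₂.1, v ∈ W) →
    φ e₁ = φ e₂ → e₁ = e₂)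
  (hψmap : ∀ v : Fin n, v ∉ W → (¬ ∃ e ∈ M, v ∈ e.1) →
    (ψ v ∉ W ∧ ¬ ∃ e ∈ M', ψ v ∈ e.1))
  (hψinj : ∀ v₁ : Fin n, v₁ ∉ W → (¬ ∃ e ∈ M, v₁ ∈ e.1) →
    ∀ v₂ : Fin n, v₂ ∉ W → (¬ ∃ e ∈ M, v₂ ∈ e.1) → ψ v₁ = ψ v₂ → v₁ = v₂)

include hM in
lemma f_eq_of_mem {v : Fin n} {e : Edge n} (hvW : v ∉ W) (he : e ∈ M) (hv : v ∈ e.1) :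
    ffun W M (gfun W M' φ) ψ v =
      (if (∃ u ∈ e.1, u ∈ W) then outEnd W (gfun W M' φ e)
       else if v = emin e then emin (gfun W M' φ e) else emax (gfun W M' φ e)) := by
  have hex : ∃ e ∈ M, v ∈ e.1 := ⟨e, he, hv⟩
  rw [ffun, if_neg hvW, dif_pos hex]
  have hee : hex.choose = e :=
    matching_unique hM hex.choose_spec.1 he hex.choose_spec.2 hv
  rw [hee]

include hM hAA' huncov hφmap in
lemma f_covered_spec {v : Fin n} {e : Edge n} (hvW : v ∉ W) (he : e ∈ M) (hv : v ∈ e.1) :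
    ffun W M (gfun W M' φ) ψ v ∈ (gfun W M' φ e).1 ∧
      ffun W M (gfun W M' φ) ψ v ∉ W := by
  rw [f_eq_of_mem hM hvW he hv]
  by_cases hex : ∃ u ∈ e.1, u ∈ W
  · rw [if_pos hex]
    have hful : ¬ ∀ u ∈ e.1, u ∈ W := fun h => hvW (h v hv)
    obtain ⟨hm, hin, hnf⟩ := gB (φ := φ) hM hAA' huncov he hful hex
    have hex' : ∃ u ∈ (gfun W M' φ e).1, u ∈ W :=
      ⟨inEnd W e, hin, (half_spec hful hex).1⟩
    exact ⟨outEnd_mem _ _, (half_spec hnf hex').2⟩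
  · rw [if_neg hex, gC hex]
    have hno := (hφmap e he hex).2
    split
    · exact ⟨emin_mem _, fun h => hno ⟨_, emin_mem _, h⟩⟩
    · exact ⟨emax_mem _, fun h => hno ⟨_, emax_mem _, h⟩⟩

include hM hM' hAA' huncov hφmap hφinj in
lemma f_inj_covered {u v : Fin n} {eu ev : Edge n}
    (huW : u ∉ W) (heu : eu ∈ M) (hu : u ∈ eu.1)
    (hvW : v ∉ W) (hev : ev ∈ M) (hv : v ∈ ev.1)
    (heq : ffun W M (gfun W M' φ) ψ u = ffun W M (gfun W M' φ) ψ v) : u = v := by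
  have hu' := (f_covered_spec (ψ := ψ) hM hAA' huncov hφmap huW heu hu).1
  have hv' := (f_covered_spec (ψ := ψ) hM hAA' huncov hφmap hvW hev hv).1
  rw [heq] at hu'
  have hgg : gfun W M' φ eu = gfun W M' φ ev :=
    matching_unique hM' (g_mem hM hAA' huncov hφmap heu)
      (g_mem hM hAA' huncov hφmap hev) hu' hv'
  obtain rfl : eu = ev := g_inj hM hAA' huncov hφmap hφinj heu hev hgg
  rw [f_eq_of_mem hM huW heu hu, f_eq_of_mem hM hvW heu hv] at heq
  by_cases hex : ∃ w ∈ eu.1, w ∈ W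
  · -- half edge: both u and v are the unique non-W endpoint
    have h1 := half_end_out hex hu huW
    have h2 := half_end_out hex hv hvW
    rw [h1, h2]
  · rw [if_neg hex, if_neg hex] at heq
    have hne := emin_ne_emax (gfun W M' φ eu)
    rcases mem_edge.1 hu with rfl | h1 <;> rcases mem_edge.1 hv with rfl | h2
    · rfl
    · rw [if_pos rfl, if_neg (by rw [h2]; exact (emin_ne_emax eu).symm)] at heq
      exact absurd heq hne
    · rw [if_neg (by rw [h1]; exact (emin_ne_emax eu).symm), if_pos rfl] at heq
      exact absurd heq.symm hne
    · rw [h1, h2]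

include hM in
lemma f_rest {v : Fin n} (hvW : v ∉ W) (hvcov : ¬ ∃ e ∈ M, v ∈ e.1) :
    ffun W M (gfun W M' φ) ψ v = ψ v := by
  rw [ffun, if_neg hvW, dif_neg hvcov]

include hM hM' hAA' huncov hφmap hφinj hψmap hψinj in
lemma f_injective : Function.Injective (ffun W M (gfun W M' φ) ψ) := by
  intro u v heq
  have fW : ∀ w ∈ W, ffun W M (gfun W M' φ) ψ w = w := fun w hw => if_pos hw
  have fcov : ∀ w ∉ W, ∀ e ∈ M, w ∈ e.1 →
      (ffun W M (gfun W M' φ) ψ w ∉ W ∧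
        ∃ e' ∈ M', ffun W M (gfun W M' φ) ψ w ∈ e'.1) := by
    intro w hw e he hwe
    obtain ⟨h1, h2⟩ := f_covered_spec (ψ := ψ) hM hAA' huncov hφmap hw he hwe
    exact ⟨h2, gfun W M' φ e, g_mem hM hAA' huncov hφmap he, h1⟩
  have frest : ∀ w ∉ W, ¬ (∃ e ∈ M, w ∈ e.1) →
      (ffun W M (gfun W M' φ) ψ w ∉ W ∧
        ¬ ∃ e' ∈ M', ffun W M (gfun W M' φ) ψ w ∈ e'.1) := by
    intro w hw hwcov
    rw [f_rest hM hw hwcov]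
    exact hψmap w hw hwcov
  by_cases huW : u ∈ W <;> by_cases hvW : v ∈ W
  · rwa [fW u huW, fW v hvW] at heq
  · rw [fW u huW] at heq
    by_cases hvcov : ∃ e ∈ M, v ∈ e.1
    · obtain ⟨e, he, hve⟩ := hvcov
      exact absurd (heq ▸ huW) (fcov v hvW e he hve).1
    · exact absurd (heq ▸ huW) (frest v hvW hvcov).1
  · rw [fW v hvW] at heq
    by_cases hucov : ∃ e ∈ M, u ∈ e.1
    · obtain ⟨e, he, hue⟩ := hucov
      exact absurd (heq ▸ hvW) (fcov u huW e he hue).1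
    · exact absurd (heq ▸ hvW) (frest u huW hucov).1
  · by_cases hucov : ∃ e ∈ M, u ∈ e.1 <;> by_cases hvcov : ∃ e ∈ M, v ∈ e.1
    · obtain ⟨eu, heu, hue⟩ := hucov
      obtain ⟨ev, hev, hve⟩ := hvcov
      exact f_inj_covered hM hM' hAA' huncov hφmap hφinj huW heu hue hvW hev hve heq
    · obtain ⟨eu, heu, hue⟩ := hucov
      exact absurd (heq ▸ (fcov u huW eu heu hue).2) (frest v hvW hvcov).2
    · obtain ⟨ev, hev, hve⟩ := hvcov
      exact absurd (heq ▸ (fcov v hvW ev hev hve).2) (frest u huW hucov).2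
    · rw [f_rest hM huW hucov, f_rest hM hvW hvcov] at heq
      exact hψinj u huW hucov v hvW hvcov heq

include hM hAA' huncov hφmap in
lemma f_edge {e : Edge n} (he : e ∈ M) :
    Sym2.map (ffun W M (gfun W M' φ) ψ) e.1 = (gfun W M' φ e).1 := by
  by_cases hful : ∀ v ∈ e.1, v ∈ W
  · rw [gA hful]
    conv_lhs => rw [edge_eq e]
    rw [Sym2.map_pair_eq,
      show ffun W M (gfun W M' φ) ψ (emin e) = emin e from if_pos (hful _ (emin_mem e)),
      show ffun W M (gfun W M' φ) ψ (emax e) = emax e from if_pos (hful _ (emax_mem e))]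
    exact (edge_eq e).symm
  by_cases hex : ∃ v ∈ e.1, v ∈ W
  · obtain ⟨hm, hin, hnf⟩ := gB (φ := φ) hM hAA' huncov he hful hex
    have hw : inEnd W e ∈ W := (half_spec hful hex).1
    have hout : outEnd W e ∉ W := (half_spec hful hex).2
    conv_lhs => rw [edge_eq' W e]
    rw [Sym2.map_pair_eq,
      show ffun W M (gfun W M' φ) ψ (inEnd W e) = inEnd W e from if_pos hw,
      f_eq_of_mem hM hout he (outEnd_mem W e), if_pos hex,
      half_end_in hnf hin hw]
    exact (edge_eq' W (gfun W M' φ e)).symm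
  · push_neg at hex
    have h1 : emin e ∉ W := hex _ (emin_mem e)
    have h2 : emax e ∉ W := hex _ (emax_mem e)
    conv_lhs => rw [edge_eq e]
    have hex' : ¬ ∃ v ∈ e.1, v ∈ W := by push_neg; exact hex
    rw [Sym2.map_pair_eq, f_eq_of_mem hM h1 he (emin_mem e),
      f_eq_of_mem hM h2 he (emax_mem e), if_neg hex', if_neg hex',
      if_pos rfl, if_neg (emin_ne_emax e).symm]
    exact (edge_eq (gfun W M' φ e)).symm

end FLemmas

section Cards
variable {W : Finset (Fin n)} {M M' : Finset (Edge n)}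

lemma card_covered (hM : IsMatching M) :
    (Finset.univ.filter (fun v : Fin n => ∃ e ∈ M, v ∈ e.1)).card = 2 * M.card := by
  have : Finset.univ.filter (fun v : Fin n => ∃ e ∈ M, v ∈ e.1)
      = M.biUnion (fun e => {emin e, emax e}) := by
    ext v
    simp only [Finset.mem_filter, Finset.mem_univ, true_and, Finset.mem_biUnion,
      Finset.mem_insert, Finset.mem_singleton]
    constructor
    · rintro ⟨e, he, hv⟩; exact ⟨e, he, mem_edge.1 hv⟩
    · rintro ⟨e, he, hv⟩; exact ⟨e, he, mem_edge.2 hv⟩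
  rw [this, Finset.card_biUnion, Finset.sum_congr rfl
    (fun e _ => Finset.card_insert_of_notMem (by
      simp only [Finset.mem_singleton]; exact emin_ne_emax e)), Finset.sum_congr rfl
    (fun e _ => by rw [Finset.card_singleton])]
  · rw [Finset.sum_const, smul_eq_mul, mul_comm]
  · intro e he f hf hef
    rw [Function.onFun, Finset.disjoint_left]
    intro v hv hv'
    have h1 : v ∈ e.1 := by
      rcases Finset.mem_insert.1 hv with rfl | h
      · exact emin_mem e
      · rw [Finset.mem_singleton.1 h]; exact emax_mem e
    have h2 : v ∈ f.1 := by
      rcases Finset.mem_insert.1 hv' with rfl | h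
      · exact emin_mem f
      · rw [Finset.mem_singleton.1 h]; exact emax_mem f
    exact hM e he f hf hef v ⟨h1, h2⟩

/-- `W`-nodes covered by a non-full edge of the matching. -/
lemma T_subset (hM : IsMatching M) (hM' : IsMatching M')
    (hAA' : M.filter (fun e : Edge n => ∀ v ∈ e.1, v ∈ W)
          = M'.filter (fun e : Edge n => ∀ v ∈ e.1, v ∈ W))
    (huncov : W.filter (fun v : Fin n => ∀ e ∈ M, v ∉ e.1)
          = W.filter (fun v : Fin n => ∀ e ∈ M', v ∉ e.1)) :
    W.filter (fun w : Fin n => ∃ e ∈ M, w ∈ e.1 ∧ ¬ ∀ v ∈ e.1, v ∈ W) ⊆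
      W.filter (fun w : Fin n => ∃ e ∈ M', w ∈ e.1 ∧ ¬ ∀ v ∈ e.1, v ∈ W) := by
  intro w hw
  obtain ⟨hwW, e, he, hwe, hnf⟩ := by
    simpa only [Finset.mem_filter] using hw
  have hcov' : ∃ e' ∈ M', w ∈ e'.1 := by
    by_contra hc
    push_neg at hc
    have : w ∈ W.filter (fun v : Fin n => ∀ e ∈ M', v ∉ e.1) :=
      Finset.mem_filter.2 ⟨hwW, hc⟩
    rw [← huncov] at this
    exact (Finset.mem_filter.1 this).2 e he hwe
  obtain ⟨e', he', hwe'⟩ := hcov'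
  refine Finset.mem_filter.2 ⟨hwW, e', he', hwe', fun hful' => ?_⟩
  have : e' ∈ M := by
    have : e' ∈ M.filter (fun e : Edge n => ∀ v ∈ e.1, v ∈ W) := by
      rw [hAA']; exact Finset.mem_filter.2 ⟨he', hful'⟩
    exact (Finset.mem_filter.1 this).1
  exact hnf (matching_unique hM he this hwe hwe' ▸ hful')

lemma card_half (hM : IsMatching M) :
    (M.filter (fun e : Edge n => (∃ v ∈ e.1, v ∈ W) ∧ ¬ ∀ v ∈ e.1, v ∈ W)).card
      = (W.filter (fun w : Fin n => ∃ e ∈ M, w ∈ e.1 ∧ ¬ ∀ v ∈ e.1, v ∈ W)).card := by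
  refine Finset.card_bij (fun e _ => inEnd W e) ?_ ?_ ?_
  · intro e he
    obtain ⟨heM, hex, hnf⟩ := by simpa only [Finset.mem_filter, and_assoc] using he
    exact Finset.mem_filter.2 ⟨(half_spec hnf hex).1, e, heM, inEnd_mem W e, hnf⟩
  · intro e₁ h₁ e₂ h₂ heq
    obtain ⟨h₁M, -, -⟩ := by simpa only [Finset.mem_filter, and_assoc] using h₁
    obtain ⟨h₂M, -, -⟩ := by simpa only [Finset.mem_filter, and_assoc] using h₂
    exact matching_unique hM h₁M h₂M (inEnd_mem W e₁) (heq ▸ inEnd_mem W e₂)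
  · intro w hw
    obtain ⟨hwW, e, he, hwe, hnf⟩ := by simpa only [Finset.mem_filter] using hw
    refine ⟨e, Finset.mem_filter.2 ⟨he, ⟨w, hwe, hwW⟩, hnf⟩,
      (half_end_in hnf hwe hwW).symm⟩

end Cards

section CardsEq
variable {W : Finset (Fin n)} {M M' : Finset (Edge n)}
  (hM : IsMatching M) (hM' : IsMatching M')
  (hAA' : M.filter (fun e : Edge n => ∀ v ∈ e.1, v ∈ W)
          = M'.filter (fun e : Edge n => ∀ v ∈ e.1, v ∈ W))
  (huncov : W.filter (fun v : Fin n => ∀ e ∈ M, v ∉ e.1)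
          = W.filter (fun v : Fin n => ∀ e ∈ M', v ∉ e.1))
  (hcard : M.card = M'.card)

lemma card_split (hm : IsMatching M) :
    M.card = (M.filter (fun e : Edge n => ∀ v ∈ e.1, v ∈ W)).card
      + (M.filter (fun e : Edge n => (∃ v ∈ e.1, v ∈ W) ∧ ¬ ∀ v ∈ e.1, v ∈ W)).card
      + (M.filter (fun e : Edge n => ¬ ∃ v ∈ e.1, v ∈ W)).card := by
  have h1 := Finset.card_filter_add_card_filter_not
    (s := M) (p := fun e : Edge n => ∀ v ∈ e.1, v ∈ W)
  have h2 := Finset.card_filter_add_card_filter_not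
    (s := M.filter (fun e : Edge n => ¬ ∀ v ∈ e.1, v ∈ W))
    (p := fun e : Edge n => ∃ v ∈ e.1, v ∈ W)
  rw [Finset.filter_filter, Finset.filter_filter] at h2
  have e1 : M.filter (fun e : Edge n => ¬ (∀ v ∈ e.1, v ∈ W) ∧ ∃ v ∈ e.1, v ∈ W)
      = M.filter (fun e : Edge n => (∃ v ∈ e.1, v ∈ W) ∧ ¬ ∀ v ∈ e.1, v ∈ W) := by
    apply Finset.filter_congr; intro e _; exact and_comm
  have e2 : M.filter (fun e : Edge n => ¬ (∀ v ∈ e.1, v ∈ W) ∧ ¬ ∃ v ∈ e.1, v ∈ W)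
      = M.filter (fun e : Edge n => ¬ ∃ v ∈ e.1, v ∈ W) := by
    apply Finset.filter_congr; intro e _
    constructor
    · exact fun h => h.2
    · exact fun h => ⟨fun hful => h ⟨emin e, emin_mem e, hful _ (emin_mem e)⟩, h⟩
  rw [e1, e2] at h2
  omega

include hM hM' hAA' huncov hcard in
lemma card_C_eq :
    (M.filter (fun e : Edge n => ¬ ∃ v ∈ e.1, v ∈ W)).card
      = (M'.filter (fun e : Edge n => ¬ ∃ v ∈ e.1, v ∈ W)).card := by
  have hs := card_split (W := W) hM
  have hs' := card_split (W := W) hM'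
  have hA : (M.filter (fun e : Edge n => ∀ v ∈ e.1, v ∈ W)).card
      = (M'.filter (fun e : Edge n => ∀ v ∈ e.1, v ∈ W)).card := by rw [hAA']
  have hT : W.filter (fun w : Fin n => ∃ e ∈ M, w ∈ e.1 ∧ ¬ ∀ v ∈ e.1, v ∈ W)
      = W.filter (fun w : Fin n => ∃ e ∈ M', w ∈ e.1 ∧ ¬ ∀ v ∈ e.1, v ∈ W) :=
    Finset.Subset.antisymm (T_subset hM hM' hAA' huncov)
      (T_subset hM' hM hAA'.symm huncov.symm)
  have hB : (M.filter (fun e : Edge n => (∃ v ∈ e.1, v ∈ W) ∧ ¬ ∀ v ∈ e.1, v ∈ W)).card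
      = (M'.filter (fun e : Edge n => (∃ v ∈ e.1, v ∈ W) ∧ ¬ ∀ v ∈ e.1, v ∈ W)).card := by
    rw [card_half hM, card_half hM', hT]
  omega

include hM hM' huncov hcard in
lemma card_R_eq :
    (Finset.univ.filter (fun v : Fin n => v ∉ W ∧ ¬ ∃ e ∈ M, v ∈ e.1)).card
      = (Finset.univ.filter (fun v : Fin n => v ∉ W ∧ ¬ ∃ e ∈ M', v ∈ e.1)).card := by
  have key : ∀ (N : Finset (Edge n)), IsMatching N →
      (Finset.univ.filter (fun v : Fin n => v ∉ W ∧ ¬ ∃ e ∈ N, v ∈ e.1)).card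
        = Fintype.card (Fin n) -
          (2 * N.card + (W.filter (fun v : Fin n => ∀ e ∈ N, v ∉ e.1)).card) := by
    intro N hN
    have hcompl : Finset.univ.filter (fun v : Fin n => v ∉ W ∧ ¬ ∃ e ∈ N, v ∈ e.1)
        = (W ∪ Finset.univ.filter (fun v : Fin n => ∃ e ∈ N, v ∈ e.1))ᶜ := by
      ext v
      simp only [Finset.mem_filter, Finset.mem_univ, true_and, Finset.mem_compl,
        Finset.mem_union, not_or]
    have hsdiff : W \ Finset.univ.filter (fun v : Fin n => ∃ e ∈ N, v ∈ e.1)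
        = W.filter (fun v : Fin n => ∀ e ∈ N, v ∉ e.1) := by
      ext v
      simp only [Finset.mem_sdiff, Finset.mem_filter, Finset.mem_univ, true_and]
      push_neg
      rfl
    rw [hcompl, Finset.card_compl, Finset.union_comm,
      ← Finset.union_sdiff_self_eq_union, Finset.card_union_of_disjoint
        Finset.disjoint_sdiff, hsdiff, card_covered hN]
  rw [key M hM, key M' hM', huncov, hcard]

end CardsEq

lemma exists_perm {W : Finset (Fin n)} {M M' : Finset (Edge n)}
    (hM : IsMatching M) (hM' : IsMatching M')
    (hAA' : M.filter (fun e : Edge n => ∀ v ∈ e.1, v ∈ W)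
          = M'.filter (fun e : Edge n => ∀ v ∈ e.1, v ∈ W))
    (huncov : W.filter (fun v : Fin n => ∀ e ∈ M, v ∉ e.1)
          = W.filter (fun v : Fin n => ∀ e ∈ M', v ∉ e.1))
    (hcard : M.card = M'.card) :
    ∃ π : Equiv.Perm (Fin n), (∀ v ∈ W, π v = v) ∧ M.image (edgeMap π) = M' := by
  -- the bijection on edges avoiding `W`
  have hcC : (M.filter (fun e : Edge n => ¬ ∃ v ∈ e.1, v ∈ W)).card
      = (M'.filter (fun e : Edge n => ¬ ∃ v ∈ e.1, v ∈ W)).card :=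
    card_C_eq hM hM' hAA' huncov hcard
  set C := M.filter (fun e : Edge n => ¬ ∃ v ∈ e.1, v ∈ W) with hCdef
  set C' := M'.filter (fun e : Edge n => ¬ ∃ v ∈ e.1, v ∈ W) with hC'def
  let φC : {x // x ∈ C} ≃ {x // x ∈ C'} := Finset.equivOfCardEq hcC
  set φ : Edge n → Edge n := fun e => if h : e ∈ C then (φC ⟨e, h⟩ : Edge n) else e
    with hφdef
  have hφmap : ∀ e ∈ M, (¬ ∃ v ∈ e.1, v ∈ W) →
      (φ e ∈ M' ∧ ¬ ∃ v ∈ (φ e).1, v ∈ W) := by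
    intro e he hnex
    have heC : e ∈ C := Finset.mem_filter.2 ⟨he, hnex⟩
    have : φ e = (φC ⟨e, heC⟩ : Edge n) := by rw [hφdef]; exact dif_pos heC
    rw [this]
    have h' : (φC ⟨e, heC⟩ : Edge n) ∈ C' := (φC ⟨e, heC⟩).2
    exact ⟨(Finset.mem_filter.1 h').1, (Finset.mem_filter.1 h').2⟩
  have hφinj : ∀ e₁ ∈ M, ∀ e₂ ∈ M, (¬ ∃ v ∈ e₁.1, v ∈ W) → (¬ ∃ v ∈ e₂.1, v ∈ W) →
      φ e₁ = φ e₂ → e₁ = e₂ := by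
    intro e₁ h₁ e₂ h₂ hn₁ hn₂ heq
    have h₁C : e₁ ∈ C := Finset.mem_filter.2 ⟨h₁, hn₁⟩
    have h₂C : e₂ ∈ C := Finset.mem_filter.2 ⟨h₂, hn₂⟩
    rw [hφdef] at heq
    simp only [dif_pos h₁C, dif_pos h₂C] at heq
    have := φC.injective (Subtype.ext heq)
    exact congrArg Subtype.val this
  -- the bijection on uncovered nodes
  have hcR : (Finset.univ.filter (fun v : Fin n => v ∉ W ∧ ¬ ∃ e ∈ M, v ∈ e.1)).card
      = (Finset.univ.filter (fun v : Fin n => v ∉ W ∧ ¬ ∃ e ∈ M', v ∈ e.1)).card :=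
    card_R_eq hM hM' huncov hcard
  set R := Finset.univ.filter (fun v : Fin n => v ∉ W ∧ ¬ ∃ e ∈ M, v ∈ e.1) with hRdef
  set R' := Finset.univ.filter (fun v : Fin n => v ∉ W ∧ ¬ ∃ e ∈ M', v ∈ e.1) with hR'def
  let ψR : {x // x ∈ R} ≃ {x // x ∈ R'} := Finset.equivOfCardEq hcR
  set ψ : Fin n → Fin n := fun v => if h : v ∈ R then (ψR ⟨v, h⟩ : Fin n) else v
    with hψdef
  have hψmap : ∀ v : Fin n, v ∉ W → (¬ ∃ e ∈ M, v ∈ e.1) →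
      (ψ v ∉ W ∧ ¬ ∃ e ∈ M', ψ v ∈ e.1) := by
    intro v hv hcov
    have hvR : v ∈ R := Finset.mem_filter.2 ⟨Finset.mem_univ v, hv, hcov⟩
    have : ψ v = (ψR ⟨v, hvR⟩ : Fin n) := by rw [hψdef]; exact dif_pos hvR
    rw [this]
    have h' : (ψR ⟨v, hvR⟩ : Fin n) ∈ R' := (ψR ⟨v, hvR⟩).2
    exact (Finset.mem_filter.1 h').2
  have hψinj : ∀ v₁ : Fin n, v₁ ∉ W → (¬ ∃ e ∈ M, v₁ ∈ e.1) →
      ∀ v₂ : Fin n, v₂ ∉ W → (¬ ∃ e ∈ M, v₂ ∈ e.1) → ψ v₁ = ψ v₂ → v₁ = v₂ := by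
    intro v₁ h₁ hc₁ v₂ h₂ hc₂ heq
    have h₁R : v₁ ∈ R := Finset.mem_filter.2 ⟨Finset.mem_univ v₁, h₁, hc₁⟩
    have h₂R : v₂ ∈ R := Finset.mem_filter.2 ⟨Finset.mem_univ v₂, h₂, hc₂⟩
    rw [hψdef] at heq
    simp only [dif_pos h₁R, dif_pos h₂R] at heq
    have := ψR.injective (Subtype.ext heq)
    exact congrArg Subtype.val this
  -- the permutation
  have hinj : Function.Injective (ffun W M (gfun W M' φ) ψ) :=
    f_injective hM hM' hAA' huncov hφmap hφinj hψmap hψinj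
  let π : Equiv.Perm (Fin n) :=
    Equiv.ofBijective _ (Finite.injective_iff_bijective.mp hinj)
  have hπ : ∀ v, π v = ffun W M (gfun W M' φ) ψ v := fun v => rfl
  refine ⟨π, fun v hv => by rw [hπ]; exact if_pos hv, ?_⟩
  have himg : ∀ e ∈ M, edgeMap π e = gfun W M' φ e := by
    intro e he
    apply Subtype.ext
    show Sym2.map π e.1 = _
    have : Sym2.map (⇑π) e.1 = Sym2.map (ffun W M (gfun W M' φ) ψ) e.1 := rfl
    rw [this]
    exact f_edge hM hAA' huncov hφmap he
  rw [Finset.image_congr (fun e he => himg e he)]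
  exact g_image hM hAA' huncov hφmap hφinj hcard

lemma edgeMap_injective (π : Equiv.Perm (Fin n)) : Function.Injective (edgeMap π) := by
  intro e f h
  apply Subtype.ext
  have h2 : Sym2.map (⇑π) e.1 = Sym2.map (⇑π) f.1 := congrArg Subtype.val h
  have h3 := congrArg (Sym2.map (⇑π.symm)) h2
  simpa [Sym2.map_map, Function.comp] using h3

lemma exists_outside {W : Finset (Fin n)} {M' : Finset (Edge n)} (hM' : IsMatching M')
    (hW : W.card < M'.card) : ∃ e ∈ M', ¬ ∃ v ∈ e.1, v ∈ W := by
  by_contra hc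
  push_neg at hc
  have hle : (M'.filter (fun e : Edge n => ∃ v ∈ e.1, v ∈ W)).card ≤ W.card := by
    apply Finset.card_le_card_of_injOn (inEnd W)
    · intro e he
      obtain ⟨heM, hex⟩ := Finset.mem_filter.1 he
      obtain ⟨v, hv, hvW⟩ := hex
      unfold inEnd
      rcases mem_edge.1 hv with rfl | rfl
      · rw [if_pos hvW]; exact hvW
      · split
        · assumption
        · exact hvW
    · intro e₁ h₁ e₂ h₂ heq
      have h₁M := (Finset.mem_filter.1 (by exact_mod_cast h₁)).1
      have h₂M := (Finset.mem_filter.1 (by exact_mod_cast h₂)).1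
      exact matching_unique hM' h₁M h₂M (inEnd_mem W e₁) (heq ▸ inEnd_mem W e₂)
  have : M'.filter (fun e : Edge n => ∃ v ∈ e.1, v ∈ W) = M' :=
    Finset.filter_true_of_mem hc
  rw [this] at hle
  omega

lemma swap_image {M' : Finset (Edge n)} (hM' : IsMatching M')
    {e' : Edge n} (he' : e' ∈ M') :
    M'.image (edgeMap (Equiv.swap (emin e') (emax e'))) = M' := by
  apply Finset.eq_of_subset_of_card_le
  · intro f hf
    obtain ⟨f', hf', rfl⟩ := Finset.mem_image.1 hf
    by_cases h : f' = e'
    · subst h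
      have : edgeMap (Equiv.swap (emin f') (emax f')) f' = f' := by
        apply Subtype.ext
        show Sym2.map _ f'.1 = f'.1
        conv_lhs => rw [edge_eq f']
        rw [Sym2.map_pair_eq, Equiv.swap_apply_left, Equiv.swap_apply_right,
          Sym2.eq_swap]
        exact (edge_eq f').symm
      rwa [this]
    · have h1 : emin f' ≠ emin e' ∧ emin f' ≠ emax e' := by
        constructor <;> intro hh <;>
          exact h (matching_unique hM' hf' he' (emin_mem f')
            (by rw [hh]; first | exact emin_mem e' | exact emax_mem e'))
      have h2 : emax f' ≠ emin e' ∧ emax f' ≠ emax e' := by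
        constructor <;> intro hh <;>
          exact h (matching_unique hM' hf' he' (emax_mem f')
            (by rw [hh]; first | exact emin_mem e' | exact emax_mem e'))
      have : edgeMap (Equiv.swap (emin e') (emax e')) f' = f' := by
        apply Subtype.ext
        show Sym2.map _ f'.1 = f'.1
        conv_lhs => rw [edge_eq f']
        rw [Sym2.map_pair_eq, Equiv.swap_apply_of_ne_of_ne h1.1 h1.2,
          Equiv.swap_apply_of_ne_of_ne h2.1 h2.2]
        exact (edge_eq f').symm
      rwa [this]
  · rw [Finset.card_image_of_injective _ (edgeMap_injective _)]

/-- orbit characterization, after Yannakakis.  Let `n ≥ 2`,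
`W ⊆ [n]`, and let `M, M'` be matchings in `K_n` with `|M| = |M'|` and `|W| < |M|`.
Then `M` and `M'` are in the same orbit under the group
`H = {π ∈ A_n : π(v) = v for all v ∈ W}` (acting on matchings by
`π.M = {{π v, π w} : {v,w} ∈ M}`) if and only if `M ∩ E_n(W) = M' ∩ E_n(W)` and
`W ∖ V(M) = W ∖ V(M')`. -/

theorem statement19 (n : ℕ) (hn : 2 ≤ n) (W : Finset (Fin n))
    (M M' : Finset (Edge n)) (hM : IsMatching M) (hM' : IsMatching M')
    (hcard : M.card = M'.card) (hW : W.card < M.card) :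
    (∃ π : Equiv.Perm (Fin n), π ∈ alternatingGroup (Fin n) ∧
        (∀ v ∈ W, π v = v) ∧ M.image (edgeMap π) = M') ↔
      (M.filter (fun e : Edge n => ∀ v ∈ e.1, v ∈ W)
          = M'.filter (fun e : Edge n => ∀ v ∈ e.1, v ∈ W) ∧
        W.filter (fun v : Fin n => ∀ e ∈ M, v ∉ e.1)
          = W.filter (fun v : Fin n => ∀ e ∈ M', v ∉ e.1)) := by
  constructor
  · rintro ⟨π, -, hfix, himg⟩
    have hWrev : ∀ v : Fin n, π v ∈ W → v ∈ W := by
      intro v hv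
      have h1 : π (π v) = π v := hfix _ hv
      have h2 : π v = v := π.injective h1
      rwa [← h2]
    constructor
    · ext e
      simp only [Finset.mem_filter]
      constructor
      · rintro ⟨heM, hful⟩
        have hfixe : edgeMap π e = e := by
          apply Subtype.ext
          show Sym2.map (⇑π) e.1 = e.1
          conv_lhs => rw [edge_eq e]
          rw [Sym2.map_pair_eq, hfix _ (hful _ (emin_mem e)),
            hfix _ (hful _ (emax_mem e))]
          exact (edge_eq e).symm
        refine ⟨?_, hful⟩
        rw [← himg]
        exact hfixe ▸ Finset.mem_image_of_mem _ heM
      · rintro ⟨heM', hful⟩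
        rw [← himg] at heM'
        obtain ⟨f, hf, rfl⟩ := Finset.mem_image.1 heM'
        have hfful : ∀ v ∈ f.1, v ∈ W := by
          intro v hv
          apply hWrev
          apply hful
          show π v ∈ Sym2.map (⇑π) f.1
          exact Sym2.mem_map.2 ⟨v, hv, rfl⟩
        have hfixf : edgeMap π f = f := by
          apply Subtype.ext
          show Sym2.map (⇑π) f.1 = f.1
          conv_lhs => rw [edge_eq f]
          rw [Sym2.map_pair_eq, hfix _ (hfful _ (emin_mem f)),
            hfix _ (hfful _ (emax_mem f))]
          exact (edge_eq f).symm
        rw [hfixf]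
        exact ⟨hf, hfixf ▸ hfful⟩
    · ext v
      simp only [Finset.mem_filter]
      constructor
      · rintro ⟨hvW, huncov⟩
        refine ⟨hvW, fun e' he' hv' => ?_⟩
        rw [← himg] at he'
        obtain ⟨f, hf, rfl⟩ := Finset.mem_image.1 he'
        have : v ∈ Sym2.map (⇑π) f.1 := hv'
        obtain ⟨u, hu, huv⟩ := Sym2.mem_map.1 this
        have huW : u ∈ W := hWrev u (huv ▸ hvW)
        have : u = v := by rw [← huv, hfix u huW]
        exact huncov f hf (this ▸ hu)
      · rintro ⟨hvW, huncov'⟩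
        refine ⟨hvW, fun e he hv => ?_⟩
        have he' : edgeMap π e ∈ M' := by
          rw [← himg]; exact Finset.mem_image_of_mem _ he
        refine huncov' _ he' ?_
        show v ∈ Sym2.map (⇑π) e.1
        exact Sym2.mem_map.2 ⟨v, hv, hfix v hvW⟩
  · rintro ⟨hAA', huncov⟩
    obtain ⟨π, hfix, himg⟩ := exists_perm hM hM' hAA' huncov hcard
    by_cases hs : Equiv.Perm.sign π = 1
    · exact ⟨π, Equiv.Perm.mem_alternatingGroup.2 hs, hfix, himg⟩
    · have hs' : Equiv.Perm.sign π = -1 := by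
        rcases Int.units_eq_one_or (Equiv.Perm.sign π) with h | h
        · exact absurd h hs
        · exact h
      obtain ⟨e', he', hnex⟩ := exists_outside hM' (hcard ▸ hW)
      have h1 : emin e' ∉ W := fun h => hnex ⟨_, emin_mem e', h⟩
      have h2 : emax e' ∉ W := fun h => hnex ⟨_, emax_mem e', h⟩
      set τ := Equiv.swap (emin e') (emax e') with hτ
      refine ⟨τ * π, ?_, ?_, ?_⟩
      · rw [Equiv.Perm.mem_alternatingGroup, map_mul,
          Equiv.Perm.sign_swap (emin_ne_emax e'), hs']
        norm_num
      · intro v hv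
        show τ (π v) = v
        rw [hfix v hv]
        exact Equiv.swap_apply_of_ne_of_ne (fun h => h1 (h ▸ hv)) (fun h => h2 (h ▸ hv))
      · have hcomp : ∀ e : Edge n, edgeMap (τ * π) e = edgeMap τ (edgeMap π e) := by
          intro e
          apply Subtype.ext
          show Sym2.map (⇑(τ * π)) e.1 = Sym2.map (⇑τ) (Sym2.map (⇑π) e.1)
          rw [Sym2.map_map]
          rfl
        calc M.image (edgeMap (τ * π))
            = (M.image (edgeMap π)).image (edgeMap τ) := by
              rw [Finset.image_congr (fun e _ => hcomp e)]
              exact (Finset.image_image (g := edgeMap τ) (f := edgeMap π) (s := M)).symm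
          _ = M'.image (edgeMap τ) := by rw [himg]
          _ = M' := swap_image hM' he'

end
end
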